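/- If a multiset A of powers of two, each dividing 2^j, sums to exactly 2^j, and y is an element of a multiset R of powers of two also summing to 2^j with A ≠ R (as multisets) and every element of A \ R is at most y, then there exists a sub-multiset Z of A \ R whose sum equals y. -/

import Mathlib

/-- Key lemma: a multiset of divisors of `2 ^ i` with sum at least `2 ^ i`
contains a sub-multiset summing to exactly `2 ^ i`. -/
lemma exists_submultiset_sum_eq_pow (i : ℕ) : ∀ S : Multiset ℕ,
    (∀ a ∈ S, a ∣ 2 ^ i) → 2 ^ i ≤ S.sum → ∃ Z ≤ S, Z.sum = 2 ^ i := by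
  induction i with
  | zero =>
    intro S hdvd hsum
    have hS : S ≠ 0 := by
      intro h; simp [h] at hsum
    obtain ⟨a, ha⟩ := Multiset.exists_mem_of_ne_zero hS
    have ha1 : a = 1 := Nat.eq_one_of_dvd_one (by simpa using hdvd a ha)
    exact ⟨{a}, Multiset.singleton_le.mpr ha, by simp [ha1]⟩
  | succ i ih =>
    intro S hdvd hsum
    by_cases hmem : (2 : ℕ) ^ (i + 1) ∈ S
    · exact ⟨{2 ^ (i + 1)}, Multiset.singleton_le.mpr hmem, by simp⟩
    · have hdvd' : ∀ a ∈ S, a ∣ 2 ^ i := by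
        intro a ha
        obtain ⟨k, hk, rfl⟩ := (Nat.dvd_prime_pow Nat.prime_two).mp (hdvd a ha)
        have hki : k ≤ i := by
          rcases Nat.lt_or_ge k (i + 1) with h | h
          · omega
          · have : k = i + 1 := by omega
            exact absurd (this ▸ ha) hmem
        exact pow_dvd_pow 2 hki
      have h1 : (2 : ℕ) ^ i ≤ S.sum := le_trans (Nat.pow_le_pow_right (by norm_num) (by omega)) hsum
      obtain ⟨Z₁, hZ₁, hZ₁sum⟩ := ih S hdvd' h1
      have hsub : ∀ a ∈ S - Z₁, a ∣ 2 ^ i := fun a ha =>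
        hdvd' a (Multiset.mem_of_le (tsub_le_self) ha)
      have hdecomp : Z₁ + (S - Z₁) = S := add_tsub_cancel_of_le hZ₁
      have hsum2 : (2 : ℕ) ^ i ≤ (S - Z₁).sum := by
        have := congrArg Multiset.sum hdecomp
        rw [Multiset.sum_add, hZ₁sum] at this
        have : 2 ^ i + (S - Z₁).sum = S.sum := this
        have h2 : 2 ^ (i + 1) ≤ S.sum := hsum
        rw [pow_succ] at h2
        omega
      obtain ⟨Z₂, hZ₂, hZ₂sum⟩ := ih (S - Z₁) hsub hsum2
      refine ⟨Z₁ + Z₂, ?_, by rw [Multiset.sum_add, hZ₁sum, hZ₂sum, pow_succ]; ring⟩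
      calc Z₁ + Z₂ ≤ Z₁ + (S - Z₁) := add_le_add_right hZ₂ Z₁
        _ = S := hdecomp

/-- If a multiset `A` of powers of two, each dividing `2 ^ j`, sums to exactly `2 ^ j`,
and `y` is an element of `R \ A` where `R` is a multiset of powers of two also summing
to `2 ^ j`, with `A ≠ R` and every element of `A \ R` at most `y`, then some
sub-multiset `Z` of `A \ R` has sum exactly `y`. -/
theorem exists_submultiset_sum_eq (j : ℕ) (A R : Multiset ℕ)
    (hA : ∀ a ∈ A, (∃ i : ℕ, a = 2 ^ i) ∧ a ∣ 2 ^ j)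
    (hR : ∀ a ∈ R, ∃ i : ℕ, a = 2 ^ i)
    (hAsum : A.sum = 2 ^ j) (hRsum : R.sum = 2 ^ j)
    (y : ℕ) (hy : y ∈ R - A) (hne : A ≠ R)
    (hle : ∀ a ∈ A - R, a ≤ y) :
    ∃ Z ≤ A - R, Z.sum = y := by
  have hyR : y ∈ R := Multiset.mem_of_le (tsub_le_self) hy
  obtain ⟨m, rfl⟩ := hR y hyR
  -- sums of the two differences agree
  have hAd : A - R + A ∩ R = A := Multiset.sub_add_inter A R
  have hRd : R - A + R ∩ A = R := Multiset.sub_add_inter R A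
  have hinter : A ∩ R = R ∩ A := Multiset.inter_comm A R
  have hsumA : (A - R).sum + (A ∩ R).sum = 2 ^ j := by
    rw [← Multiset.sum_add, hAd, hAsum]
  have hsumR : (R - A).sum + (A ∩ R).sum = 2 ^ j := by
    rw [hinter, ← Multiset.sum_add, hRd, hRsum]
  have hsums : (A - R).sum = (R - A).sum := by omega
  have hyle : 2 ^ m ≤ (R - A).sum := Multiset.single_le_sum (fun x _ => Nat.zero_le x) _ hy
  have hge : 2 ^ m ≤ (A - R).sum := hsums ▸ hyle
  have hdvd : ∀ a ∈ A - R, a ∣ 2 ^ m := by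
    intro a ha
    have haA : a ∈ A := Multiset.mem_of_le (tsub_le_self) ha
    obtain ⟨⟨k, rfl⟩, -⟩ := hA a haA
    have : k ≤ m := (Nat.pow_le_pow_iff_right (by norm_num)).mp (hle _ ha)
    exact pow_dvd_pow 2 this
  exact exists_submultiset_sum_eq_pow m (A - R) hdvd hge
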